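/- For positive sequences M^1 and M^2, the Roumieu space F^{{M^1}} is contained in the Beurling space F^{(M^2)} = ∩_{ρ>0} F^{M^2}_ρ if and only if lim_{k→∞} (M^1_k / M^2_k)^{1/k} = 0 (i.e., M^1 ◁ M^2). -/

import Mathlib

/-- The sequence space `F^M_ρ`. -/
def seqSpace (M : ℕ → ℝ) (ρ : ℝ) : Set (ℕ → ℝ) :=
  {f | ∃ C > (0 : ℝ), ∀ k : ℕ, |f k| ≤ C * ρ ^ k * (Nat.factorial k) * M k}

/-- The Roumieu sequence space `F^{{M}} = ⋃_{ρ>0} F^M_ρ`. -/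
def seqSpaceRoumieu (M : ℕ → ℝ) : Set (ℕ → ℝ) :=
  ⋃ ρ > (0 : ℝ), seqSpace M ρ

/-- The Beurling sequence space `F^{(M)} = ⋂_{ρ>0} F^M_ρ`. -/
def seqSpaceBeurling (M : ℕ → ℝ) : Set (ℕ → ℝ) :=
  ⋂ ρ > (0 : ℝ), seqSpace M ρ

/-- `M¹ ◁ M²`: for all `ρ > 0` there is `C > 0` with `M¹_k ≤ C ρ^k M²_k`. -/
def seqLhd (M₁ M₂ : ℕ → ℝ) : Prop :=
  ∀ ρ > (0 : ℝ), ∃ C > (0 : ℝ), ∀ k : ℕ, M₁ k ≤ C * ρ ^ k * M₂ k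

/-- `F^{{M¹}} ⊆ F^{(M²)}` iff `M¹ ◁ M²`. -/
theorem seqSpaceRoumieu_subset_Beurling_iff (M₁ M₂ : ℕ → ℝ)
    (hpos₁ : ∀ k, 0 < M₁ k) (hpos₂ : ∀ k, 0 < M₂ k) :
    seqSpaceRoumieu M₁ ⊆ seqSpaceBeurling M₂ ↔ seqLhd M₁ M₂ := by
  constructor
  · intro h ρ hρ
    have hf : (fun k => (Nat.factorial k : ℝ) * M₁ k) ∈ seqSpaceRoumieu M₁ := by
      simp only [seqSpaceRoumieu, Set.mem_iUnion]
      refine ⟨1, one_pos, 1, one_pos, fun k => ?_⟩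
      have := hpos₁ k
      rw [abs_of_pos (by positivity)]
      simp
    have hb := h hf
    simp only [seqSpaceBeurling, Set.mem_iInter] at hb
    obtain ⟨C, hC, hCk⟩ := hb ρ hρ
    refine ⟨C, hC, fun k => ?_⟩
    have h1 := hpos₁ k
    have h2 := hCk k
    rw [abs_of_pos (by positivity)] at h2
    have hfac : (0:ℝ) < (Nat.factorial k : ℝ) := by positivity
    have h4 : (Nat.factorial k:ℝ) * M₁ k ≤ (Nat.factorial k:ℝ) * (C * ρ ^ k * M₂ k) := by
      simp only [] at h2
      linarith [h2]
    exact le_of_mul_le_mul_left h4 hfac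
  · intro h f hf
    simp only [seqSpaceRoumieu, Set.mem_iUnion] at hf
    obtain ⟨ρ₀, hρ₀, C₀, hC₀, hfk⟩ := hf
    simp only [seqSpaceBeurling, Set.mem_iInter]
    intro ρ hρ
    obtain ⟨C₁, hC₁, hM⟩ := h (ρ / ρ₀) (by positivity)
    refine ⟨C₀ * C₁, by positivity, fun k => ?_⟩
    have h1 := hfk k
    have h2 := hM k
    have hfac : (0:ℝ) < (Nat.factorial k : ℝ) := by positivity
    have key : C₀ * ρ₀ ^ k * (Nat.factorial k) * M₁ k ≤
        C₀ * ρ₀ ^ k * (Nat.factorial k) * (C₁ * (ρ / ρ₀) ^ k * M₂ k) := by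
      apply mul_le_mul_of_nonneg_left h2 (by positivity)
    have heq : C₀ * ρ₀ ^ k * (Nat.factorial k) * (C₁ * (ρ / ρ₀) ^ k * M₂ k) =
        C₀ * C₁ * ρ ^ k * (Nat.factorial k) * M₂ k := by
      field_simp [div_pow, mul_pow]
      have hinv : ρ₀ ^ k * ρ₀⁻¹ ^ k = 1 := by rw [← mul_pow, mul_inv_cancel₀ hρ₀.ne', one_pow]
      linear_combination ρ ^ k * M₂ k * hinv
    linarith [h1, key, heq.le]
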